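/- Let f₋ : [0,1] → ℝ be of class C² with f₋(0) = f₋(1) = 0, f₋ > 0 on (0,1), and μ₋ := f₋′(0) > 0. Let a, b be real numbers with 2√μ₋ < a ≤ b and, for each c ∈ [a,b], set λ_c := (c − √(c² − 4μ₋))/2 and let φ_c : ℝ → (0,1) be a solution of φ_c″ + c·φ_c′ + f₋(φ_c) = 0 on ℝ with φ_c(−∞) = 1, φ_c(+∞) = 0 and φ_c(x)·e^{λ_c x} → 1 as x → +∞. Then, for every η > 0, there exists A_η ∈ ℝ such that φ_c(x) ≥ (1 − η)·e^{−λ_c x} for all c ∈ [a,b] and all x ≥ A_η; that is, the exponential asymptotics of φ_c at +∞ hold uniformly with respect to c ∈ [a,b]. -/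

import Mathlib

open Real Filter Set MeasureTheory

/-- Time derivative of `u` at `(t,x)`. -/
noncomputable def dT (u : ℝ → ℝ → ℝ) (t x : ℝ) : ℝ := deriv (fun s => u s x) t

/-- First space derivative of `u` at `(t,x)`. -/
noncomputable def dX (u : ℝ → ℝ → ℝ) (t x : ℝ) : ℝ := deriv (fun y => u t y) x

/-- Second space derivative of `u` at `(t,x)`. -/
noncomputable def dXX (u : ℝ → ℝ → ℝ) (t x : ℝ) : ℝ := deriv (deriv (fun y => u t y)) x

/-- `u` is a classical (time-global) solution of `u_t = u_xx + f(t,u)` on `ℝ × ℝ`. -/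
def SolPDE (f u : ℝ → ℝ → ℝ) : Prop :=
  ∀ t x : ℝ,
    DifferentiableAt ℝ (fun s => u s x) t ∧
    DifferentiableAt ℝ (fun y => u t y) x ∧
    DifferentiableAt ℝ (deriv (fun y => u t y)) x ∧
    dT u t x = dXX u t x + f t (u t x)

/-- The uniform-in-time limits defining a transition front connecting 0 and 1. -/
def FrontLimits (u : ℝ → ℝ → ℝ) (X : ℝ → ℝ) : Prop :=
  ∀ ε > (0:ℝ), ∃ M : ℝ, ∀ t x : ℝ,
    (x ≤ -M → |u t (X t + x) - 1| ≤ ε) ∧ (M ≤ x → |u t (X t + x)| ≤ ε)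

/-- `u` is a transition front connecting 0 and 1 for `u_t = u_xx + f(t,u)`,
with front position `X`. -/
def IsTransitionFront (f u : ℝ → ℝ → ℝ) (X : ℝ → ℝ) : Prop :=
  SolPDE f u ∧ (∀ t x : ℝ, u t x ∈ Icc (0:ℝ) 1) ∧ FrontLimits u X

/-- `u` has asymptotic past speed `c`. -/
def PastSpeed (X : ℝ → ℝ) (c : ℝ) : Prop :=
  Tendsto (fun t => X t / t) atBot (nhds c)

/-- `u` has asymptotic future speed `c`. -/
def FutureSpeed (X : ℝ → ℝ) (c : ℝ) : Prop :=
  Tendsto (fun t => X t / t) atTop (nhds c)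

/-- Standing regularity assumptions: `f` is uniformly Hölder continuous on `ℝ × [0,1]`,
of class `C¹` there, with bounded `∂f/∂u`. -/
def Reg (f : ℝ → ℝ → ℝ) : Prop :=
  (∃ α L : ℝ, α ∈ Ioc (0:ℝ) 1 ∧ 0 < L ∧
    ∀ t₁ t₂ v₁ v₂ : ℝ, v₁ ∈ Icc (0:ℝ) 1 → v₂ ∈ Icc (0:ℝ) 1 →
      |f t₁ v₁ - f t₂ v₂| ≤ L * (|t₁ - t₂| + |v₁ - v₂|) ^ α) ∧
  ContDiffOn ℝ 1 (fun p : ℝ × ℝ => f p.1 p.2) (univ ×ˢ Icc (0:ℝ) 1) ∧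
  (∃ M : ℝ, ∀ t : ℝ, ∀ v ∈ Icc (0:ℝ) 1, |deriv (f t) v| ≤ M)

/-- Hypothesis (H1). -/
def H1 (f : ℝ → ℝ → ℝ) : Prop :=
  (∀ t : ℝ, f t 0 = 0 ∧ f t 1 = 0) ∧
  (∀ t : ℝ, ∀ v ∈ Icc (0:ℝ) 1, 0 ≤ f t v) ∧
  (∀ t v w : ℝ, 0 < v → v ≤ w → w ≤ 1 → f t w / w ≤ f t v / v)

/-- Hypothesis (H2): limiting nonlinearities `fm = f₋`, `fp = f₊` with
`μm = f₋'(0) > 0`, `μp = f₊'(0) > 0`. -/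
def H2 (f : ℝ → ℝ → ℝ) (fm fp : ℝ → ℝ) (μm μp : ℝ) : Prop :=
  ContDiffOn ℝ 1 fm (Icc (0:ℝ) 1) ∧ ContDiffOn ℝ 1 fp (Icc (0:ℝ) 1) ∧
  fm 0 = 0 ∧ fm 1 = 0 ∧ fp 0 = 0 ∧ fp 1 = 0 ∧
  (∀ v ∈ Ioo (0:ℝ) 1, 0 < fm v) ∧ (∀ v ∈ Ioo (0:ℝ) 1, 0 < fp v) ∧
  (∀ ε > (0:ℝ), ∃ T : ℝ, ∀ t ≤ T, ∀ v ∈ Ioo (0:ℝ) 1, |f t v / fm v - 1| ≤ ε) ∧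
  (∀ ε > (0:ℝ), ∃ T : ℝ, ∀ t ≥ T, ∀ v ∈ Ioo (0:ℝ) 1, |f t v / fp v - 1| ≤ ε) ∧
  HasDerivWithinAt fm μm (Ici (0:ℝ)) 0 ∧ HasDerivWithinAt fp μp (Ici (0:ℝ)) 0 ∧
  0 < μm ∧ 0 < μp

/-- Hypothesis (H3). -/
def H3 (f : ℝ → ℝ → ℝ) : Prop :=
  ∃ C δ ω : ℝ, 0 < C ∧ δ ∈ Ioc (0:ℝ) 1 ∧ ω ∈ Ioc (0:ℝ) 1 ∧
    ∀ t : ℝ, ∀ v ∈ Ioo (0:ℝ) δ, deriv (f t) 0 * v - C * v ^ (1 + ω) ≤ f t v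

/-- Hypothesis (H4). -/
def H4 (f : ℝ → ℝ → ℝ) (fm : ℝ → ℝ) : Prop :=
  ∃ ζ : ℝ → ℝ, ContinuousOn ζ (Iio (0:ℝ)) ∧ IntegrableOn ζ (Iio (0:ℝ)) ∧
    ∀ t < (0:ℝ), ∀ s ∈ Ioo (0:ℝ) 1, |f t s / fm s - 1| ≤ ζ t

/-- Hypothesis (H5). -/
def H5 (f : ℝ → ℝ → ℝ) (fp : ℝ → ℝ) : Prop :=
  ∃ ζ : ℝ → ℝ, ContinuousOn ζ (Ioi (0:ℝ)) ∧ IntegrableOn ζ (Ioi (0:ℝ)) ∧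
    ∀ t > (0:ℝ), ∀ s ∈ Ioo (0:ℝ) 1, |f t s / fp s - 1| ≤ ζ t

/-- `φ` is a standard traveling front with speed `c` connecting 0 and 1 for the
homogeneous nonlinearity `g`, i.e. a decreasing solution of `φ'' + cφ' + g(φ) = 0`
with `φ(-∞) = 1`, `φ(+∞) = 0`. -/
def IsTravelingFront (g : ℝ → ℝ) (c : ℝ) (φ : ℝ → ℝ) : Prop :=
  (∀ x : ℝ, φ x ∈ Ioo (0:ℝ) 1) ∧ StrictAnti φ ∧
  (∀ x : ℝ, DifferentiableAt ℝ φ x ∧ DifferentiableAt ℝ (deriv φ) x ∧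
    deriv (deriv φ) x + c * deriv φ x + g (φ x) = 0) ∧
  Tendsto φ atBot (nhds 1) ∧ Tendsto φ atTop (nhds 0)

/-- `u(t, Y(t) + ·) → φ` in `C²(ℝ)` as `t → +∞`. -/
def C2ConvAtTop (u : ℝ → ℝ → ℝ) (Y : ℝ → ℝ) (φ : ℝ → ℝ) : Prop :=
  ∀ ε > (0:ℝ), ∃ T : ℝ, ∀ t ≥ T, ∀ x : ℝ,
    |u t (Y t + x) - φ x| ≤ ε ∧ |dX u t (Y t + x) - deriv φ x| ≤ ε ∧
    |dXX u t (Y t + x) - deriv (deriv φ) x| ≤ ε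

/-- `u(t, Y(t) + ·) → φ` in `C²(ℝ)` as `t → -∞`. -/
def C2ConvAtBot (u : ℝ → ℝ → ℝ) (Y : ℝ → ℝ) (φ : ℝ → ℝ) : Prop :=
  ∀ ε > (0:ℝ), ∃ T : ℝ, ∀ t ≤ T, ∀ x : ℝ,
    |u t (Y t + x) - φ x| ≤ ε ∧ |dX u t (Y t + x) - deriv φ x| ≤ ε ∧
    |dXX u t (Y t + x) - deriv (deriv φ) x| ≤ ε


open Topology

/-- Second-derivative test at an interior minimum. -/
lemma second_deriv_test {v dv : ℝ → ℝ} {x₁ R xs d : ℝ}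
    (hv : ∀ x, HasDerivAt v (dv x) x)
    (hdv : HasDerivAt dv d xs)
    (hxs : xs ∈ Ioo x₁ R)
    (hmin : IsMinOn v (Icc x₁ R) xs) : 0 ≤ d := by
  by_contra hd
  push_neg at hd
  have hloc : IsLocalMin v xs := hmin.isLocalMin (Icc_mem_nhds hxs.1 hxs.2)
  have hdv0 : dv xs = 0 := by
    have h := hloc.deriv_eq_zero
    rwa [(hv xs).deriv] at h
  have hslope := hasDerivAt_iff_tendsto_slope.1 hdv
  have hev : ∀ᶠ y in 𝓝[≠] xs, slope dv xs y < 0 := hslope.eventually (gt_mem_nhds hd)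
  rw [eventually_nhdsWithin_iff, Metric.eventually_nhds_iff] at hev
  obtain ⟨ε, hε, hball⟩ := hev
  have hRxs : 0 < R - xs := by linarith [hxs.2]
  set t := min (ε / 2) ((R - xs) / 2) with ht
  have htpos : 0 < t := lt_min (by linarith) (by linarith)
  have hneg : ∀ y ∈ Ioo xs (xs + t), deriv v y < 0 := by
    intro y hy
    have hy1 : xs < y := hy.1
    have hy2 : y < xs + t := hy.2
    have htε : t ≤ ε / 2 := min_le_left _ _
    have hdist : dist y xs < ε := by
      rw [Real.dist_eq, abs_lt]
      constructor <;> linarith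
    have hne : y ∈ ({xs}ᶜ : Set ℝ) := by
      simp only [mem_compl_iff, mem_singleton_iff]
      exact ne_of_gt hy1
    have hs := hball hdist hne
    rw [slope_def_field, hdv0, sub_zero] at hs
    have hypos : 0 < y - xs := by linarith
    have : dv y < 0 := by
      have h2 := mul_neg_of_neg_of_pos hs hypos
      rwa [div_mul_cancel₀ _ (ne_of_gt hypos)] at h2
    rwa [(hv y).deriv]
  have hcont : ContinuousOn v (Icc xs (xs + t)) :=
    (fun x _ => (hv x).differentiableAt.continuousAt.continuousWithinAt)
  have hanti : StrictAntiOn v (Icc xs (xs + t)) := by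
    apply strictAntiOn_of_deriv_neg (convex_Icc _ _) hcont
    intro y hy
    rw [interior_Icc] at hy
    exact hneg y hy
  have hmem1 : xs ∈ Icc xs (xs + t) := ⟨le_refl _, by linarith⟩
  have hmem2 : xs + t ∈ Icc xs (xs + t) := ⟨by linarith, le_refl _⟩
  have hlt : v (xs + t) < v xs := hanti hmem1 hmem2 (by linarith)
  have htR : t ≤ (R - xs) / 2 := min_le_right _ _
  have hmem3 : xs + t ∈ Icc x₁ R := ⟨by linarith [hxs.1], by linarith⟩
  exact absurd (hmin hmem3) (not_le.2 hlt)

/-- Quadratic lower bound `fm s ≥ μm s - C s²` on `[0,1]`. -/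
lemma fm_lower (fm : ℝ → ℝ) (μm : ℝ) (hfmC2 : ContDiffOn ℝ 2 fm (Icc (0:ℝ) 1))
    (hfm0 : fm 0 = 0) (hμm : HasDerivWithinAt fm μm (Ici (0:ℝ)) 0) :
    ∃ C : ℝ, 0 < C ∧ ∀ s ∈ Icc (0:ℝ) 1, μm * s - C * s ^ 2 ≤ fm s := by
  have hU : UniqueDiffOn ℝ (Icc (0:ℝ) 1) := uniqueDiffOn_Icc one_pos
  set g := derivWithin fm (Icc (0:ℝ) 1) with hgdef
  have hg1 : ContDiffOn ℝ 1 g (Icc (0:ℝ) 1) := hfmC2.derivWithin hU (by norm_num)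
  have h0mem : (0:ℝ) ∈ Icc (0:ℝ) 1 := left_mem_Icc.2 zero_le_one
  have hg0 : g 0 = μm := (hμm.mono Icc_subset_Ici_self).derivWithin (hU 0 h0mem)
  obtain ⟨L, hL⟩ := isCompact_Icc.exists_bound_of_continuousOn
    ((hg1.derivWithin (m := 0) hU (by norm_num)).continuousOn)
  have hL0 : 0 ≤ L := le_trans (norm_nonneg _) (hL 0 h0mem)
  have hLip : ∀ s ∈ Icc (0:ℝ) 1, ‖g s - g 0‖ ≤ L * (s - 0) :=
    norm_image_sub_le_of_norm_deriv_le_segment (hg1.differentiableOn (by norm_num))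
      (fun y hy => hL y (Ico_subset_Icc_self hy))
  refine ⟨L / 2 + 1, by positivity, ?_⟩
  set C := L / 2 + 1 with hCdef
  set F := fun s : ℝ => fm s - μm * s + C * s ^ 2 with hFdef
  have hFc : ContinuousOn F (Icc (0:ℝ) 1) := by
    apply ContinuousOn.add
    · exact hfmC2.continuousOn.sub (continuous_const.mul continuous_id).continuousOn
    · exact (continuous_const.mul (continuous_pow 2)).continuousOn
  have hdiff : ∀ s ∈ Ioo (0:ℝ) 1, DifferentiableAt ℝ fm s := by
    intro s hs
    exact ((hfmC2.differentiableOn (by norm_num)) s ⟨hs.1.le, hs.2.le⟩).differentiableAt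
      (Icc_mem_nhds hs.1 hs.2)
  have hmono : MonotoneOn F (Icc (0:ℝ) 1) := by
    apply monotoneOn_of_deriv_nonneg (convex_Icc _ _) hFc
    · rw [interior_Icc]
      intro s hs
      have h1 : HasDerivAt F (deriv fm s - μm * 1 + C * (↑2 * s ^ 1)) s :=
        (((hdiff s hs).hasDerivAt).sub ((hasDerivAt_id s).const_mul μm)).add
          ((hasDerivAt_pow 2 s).const_mul C)
      exact h1.differentiableAt.differentiableWithinAt
    · rw [interior_Icc]
      intro s hs
      have h1 : HasDerivAt F (deriv fm s - μm * 1 + C * (↑2 * s ^ 1)) s :=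
        (((hdiff s hs).hasDerivAt).sub ((hasDerivAt_id s).const_mul μm)).add
          ((hasDerivAt_pow 2 s).const_mul C)
      rw [h1.deriv]
      have hgs : deriv fm s = g s := (derivWithin_of_mem_nhds (Icc_mem_nhds hs.1 hs.2)).symm
      have hls := hLip s ⟨hs.1.le, hs.2.le⟩
      rw [hg0, Real.norm_eq_abs, sub_zero] at hls
      have h2 : μm - L * s ≤ g s := by
        have := (abs_le.1 hls).1
        linarith
      have hspos : 0 ≤ s := hs.1.le
      rw [hgs, hCdef]
      push_cast
      nlinarith [h2]
  intro s hs
  have h := hmono h0mem hs hs.1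
  have hF0 : F 0 = 0 := by simp [hFdef, hfm0]
  rw [hF0] at h
  simp only [hFdef] at h
  linarith

set_option maxHeartbeats 1000000 in
/-- Comparison principle on a compact interval for the subsolution `ψ` vs the solution `φ`. -/
lemma comparison_half (fm φ ψ ψ1 ψ2 : ℝ → ℝ) (c lam' μm ρ δ₀ x₁ R : ℝ)
    (hρ : 0 < ρ) (hδ₀1 : δ₀ < 1)
    (hφd : ∀ x : ℝ, DifferentiableAt ℝ φ x ∧ DifferentiableAt ℝ (deriv φ) x ∧
      deriv (deriv φ) x + c * deriv φ x + fm (φ x) = 0)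
    (hφ01 : ∀ x, φ x ∈ Ioo (0:ℝ) 1)
    (hψ1 : ∀ x, HasDerivAt ψ (ψ1 x) x) (hψ2 : ∀ x, HasDerivAt ψ1 (ψ2 x) x)
    (hsub : ∀ x ∈ Icc x₁ R, 0 ≤ ψ2 x + c * ψ1 x + fm (ψ x))
    (hψδ : ∀ x ∈ Icc x₁ R, ψ x ≤ δ₀)
    (hfm_cont : ContinuousOn fm (Icc 0 1))
    (hfm_diff : ∀ s ∈ Ioo (0:ℝ) 1, DifferentiableAt ℝ fm s)
    (hfm_deriv : ∀ s ∈ Ioo (0:ℝ) δ₀, deriv fm s ≤ μm + ρ / 2)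
    (hlam' : μm + ρ ≤ c * lam' - lam' ^ 2)
    (hleft : ψ x₁ ≤ φ x₁) (hright : ψ R ≤ φ R) :
    ∀ x ∈ Icc x₁ R, ψ x ≤ φ x := by
  by_contra hcon
  push_neg at hcon
  obtain ⟨x₀, hx₀, hx₀lt⟩ := hcon
  have hx₁R : x₁ ≤ R := hx₀.1.trans hx₀.2
  set E : ℝ → ℝ := fun y => Real.exp (lam' * y) with hEdef
  have hEd : ∀ y, HasDerivAt E (lam' * E y) y := by
    intro y
    have h1 : HasDerivAt (fun z : ℝ => lam' * z) (lam' * 1) y := (hasDerivAt_id y).const_mul lam'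
    have h2 := h1.exp
    simp only [mul_one] at h2
    simpa [hEdef, mul_comm] using h2
  set w : ℝ → ℝ := fun y => φ y - ψ y with hwdef
  set w1 : ℝ → ℝ := fun y => deriv φ y - ψ1 y with hw1def
  set w2 : ℝ → ℝ := fun y => deriv (deriv φ) y - ψ2 y with hw2def
  have hwd : ∀ y, HasDerivAt w (w1 y) y := fun y => ((hφd y).1.hasDerivAt).sub (hψ1 y)
  have hw1d : ∀ y, HasDerivAt w1 (w2 y) y := fun y => ((hφd y).2.1.hasDerivAt).sub (hψ2 y)
  set v : ℝ → ℝ := fun y => w y * E y with hvdef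
  set v1 : ℝ → ℝ := fun y => w1 y * E y + w y * (lam' * E y) with hv1def
  have hvd : ∀ y, HasDerivAt v (v1 y) y := fun y => (hwd y).mul (hEd y)
  have hcontv : ContinuousOn v (Icc x₁ R) :=
    fun y _ => (hvd y).differentiableAt.continuousAt.continuousWithinAt
  obtain ⟨xs, hxsmem, hxsmin⟩ := isCompact_Icc.exists_isMinOn (nonempty_Icc.2 hx₁R) hcontv
  have hvx₀ : v x₀ < 0 := by
    have hw0 : w x₀ < 0 := by simp only [hwdef]; linarith
    exact mul_neg_of_neg_of_pos hw0 (Real.exp_pos _)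
  have hvxs : v xs < 0 := lt_of_le_of_lt (hxsmin hx₀) hvx₀
  have hExs : (0:ℝ) < E xs := Real.exp_pos _
  have hwxs : w xs < 0 := by
    by_contra hcon2
    push_neg at hcon2
    exact absurd (mul_nonneg hcon2 hExs.le) (not_le.2 hvxs)
  have hwleft : 0 ≤ w x₁ := by simp only [hwdef]; linarith
  have hwright : 0 ≤ w R := by simp only [hwdef]; linarith
  have hxs_left : x₁ < xs := by
    rcases lt_or_eq_of_le hxsmem.1 with h | h
    · exact h
    · exfalso; rw [← h] at hwxs; linarith
  have hxs_right : xs < R := by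
    rcases lt_or_eq_of_le hxsmem.2 with h | h
    · exact h
    · exfalso; rw [h] at hwxs; linarith
  have hloc : IsLocalMin v xs := hxsmin.isLocalMin (Icc_mem_nhds hxs_left hxs_right)
  have hv1xs : v1 xs = 0 := by
    have h := hloc.deriv_eq_zero
    rwa [(hvd xs).deriv] at h
  have hw1xs : w1 xs = -lam' * w xs := by
    have h2 : (w1 xs + lam' * w xs) * E xs = 0 := by
      simp only [hv1def] at hv1xs; linear_combination hv1xs
    rcases mul_eq_zero.1 h2 with h3 | h3
    · linarith
    · exact absurd h3 (ne_of_gt hExs)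
  set d : ℝ := w2 xs * E xs + w1 xs * (lam' * E xs) +
      (w1 xs * (lam' * E xs) + w xs * (lam' * (lam' * E xs))) with hddef
  have hv1d : HasDerivAt v1 d xs :=
    ((hw1d xs).mul (hEd xs)).add ((hwd xs).mul ((hEd xs).const_mul lam'))
  have hd0 : 0 ≤ d := second_deriv_test hvd hv1d ⟨hxs_left, hxs_right⟩ hxsmin
  -- extract the scalar inequality
  have hq : 0 ≤ w2 xs + 2 * lam' * w1 xs + lam' ^ 2 * w xs := by
    have hdE : d = (w2 xs + 2 * lam' * w1 xs + lam' ^ 2 * w xs) * E xs := by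
      rw [hddef]; ring
    by_contra hcon3
    push_neg at hcon3
    linarith only [hd0, hdE, mul_neg_of_neg_of_pos hcon3 hExs]
  -- mean value theorem
  have hφxs := hφ01 xs
  have hψxs_le : ψ xs ≤ δ₀ := hψδ xs hxsmem
  have hlt : φ xs < ψ xs := by
    have : w xs = φ xs - ψ xs := rfl
    linarith [hwxs, this.symm.le]
  have hIcc_sub : Icc (φ xs) (ψ xs) ⊆ Icc (0:ℝ) 1 :=
    Icc_subset_Icc hφxs.1.le (hψxs_le.trans hδ₀1.le)
  obtain ⟨ξ, hξ, hξeq⟩ := exists_hasDerivAt_eq_slope fm (deriv fm) hlt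
    (hfm_cont.mono hIcc_sub)
    (fun y hy => (hfm_diff y ⟨lt_trans hφxs.1 hy.1,
      lt_of_lt_of_le hy.2 (hψxs_le.trans hδ₀1.le)⟩).hasDerivAt)
  have hξδ : deriv fm ξ ≤ μm + ρ / 2 :=
    hfm_deriv ξ ⟨lt_trans hφxs.1 hξ.1, lt_of_lt_of_le hξ.2 hψxs_le⟩
  rw [eq_div_iff (by linarith : ψ xs - φ xs ≠ 0)] at hξeq
  -- hξeq : deriv fm ξ * (ψ xs - φ xs) = fm (ψ xs) - fm (φ xs)
  have hode := (hφd xs).2.2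
  have hsubxs := hsub xs hxsmem
  -- unfold definitions
  have e0 : w xs = φ xs - ψ xs := rfl
  have e1 : w1 xs = deriv φ xs - ψ1 xs := rfl
  have e2 : w2 xs = deriv (deriv φ) xs - ψ2 xs := rfl
  have hB : deriv φ xs = ψ1 xs - lam' * w xs := by rw [e1] at hw1xs; linarith
  have hcB : c * deriv φ xs = c * ψ1 xs - c * (lam' * w xs) := by rw [hB]; ring
  have hgw : fm (ψ xs) - fm (φ xs) = -(deriv fm ξ * w xs) := by
    rw [← hξeq, e0]; ring
  have hlw : 2 * lam' * w1 xs = -2 * lam' ^ 2 * w xs := by rw [hw1xs]; ring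
  have hcoef : ρ / 2 ≤ c * lam' - lam' ^ 2 - deriv fm ξ := by linarith
  have hprod : w xs * (c * lam' - lam' ^ 2 - deriv fm ξ) < 0 :=
    mul_neg_of_neg_of_pos hwxs (by linarith)
  linarith only [hq, hode, hsubxs, hgw, hcB, hlw, hprod, e2]


lemma lamb_mono (μm b c Db Dc : ℝ) (hμ : 0 < μm) (hcb : c ≤ b) (hc0 : 0 < c)
    (hDb2 : Db ^ 2 = b ^ 2 - 4 * μm) (hDc2 : Dc ^ 2 = c ^ 2 - 4 * μm)
    (hDb0 : 0 ≤ Db) (hDc0 : 0 ≤ Dc) (hDbb : Db < b) (hDcc : Dc < c) :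
    (b - Db) / 2 ≤ (c - Dc) / 2 := by
  nlinarith [mul_nonneg (sub_nonneg.2 hcb) (by linarith : (0:ℝ) ≤ b + c - Db - Dc),
    (by linarith : (0:ℝ) ≤ Db + Dc)]

set_option maxHeartbeats 1000000 in
/-- The whole argument for a fixed speed `c`, with uniform constants supplied. -/
lemma per_c (fm : ℝ → ℝ) (μm C ρ δ₀ ε₀ q₀ x₁ K xK θ η η' lam gam lam' c x : ℝ)
    (φc : ℝ → ℝ)
    (hC0 : 0 < C) (hCfm : ∀ s ∈ Icc (0:ℝ) 1, μm * s - C * s ^ 2 ≤ fm s)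
    (hρ0 : 0 < ρ) (hδ₀1 : δ₀ < 1)
    (hfm_cont : ContinuousOn fm (Icc 0 1))
    (hfm_diff : ∀ s ∈ Ioo (0:ℝ) 1, DifferentiableAt ℝ fm s)
    (hfm_deriv : ∀ s ∈ Ioo (0:ℝ) δ₀, deriv fm s ≤ μm + ρ / 2)
    (hε₀0 : 0 < ε₀) (hq₀0 : 0 < q₀)
    (hlam0 : 0 < lam)
    (hlamODE : lam ^ 2 - c * lam + μm = 0)
    (hgamdef : gam = lam + ε₀)
    (hgam2 : gam ≤ 2 * lam)
    (hgamq : q₀ ≤ -(gam ^ 2 - c * gam + μm))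
    (hlamA : μm + ρ ≤ c * lam' - lam' ^ 2)
    (hx₁1 : 1 ≤ x₁) (hδsmall : Real.exp (-(lam * x₁)) ≤ δ₀)
    (hK1 : 1 ≤ K) (hKC : 2 * C ≤ K * q₀)
    (hxKdef : xK = Real.log K / ε₀) (hxKx₁ : x₁ ≤ xK)
    (hη'0 : 0 < η') (hη'η : η' ≤ η) (hθdef : θ = 1 - η' / 2) (hθhalf : 1 / 2 ≤ θ)
    (hθ1 : θ < 1)
    (hφ01 : ∀ y : ℝ, φc y ∈ Ioo (0:ℝ) 1)
    (hφode : ∀ y : ℝ, DifferentiableAt ℝ φc y ∧ DifferentiableAt ℝ (deriv φc) y ∧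
      deriv (deriv φc) y + c * deriv φc y + fm (φc y) = 0)
    (hφlim : Tendsto (fun y => φc y * Real.exp (lam * y)) atTop (nhds 1))
    (hx : max xK (Real.log (2 * K / η') / ε₀) ≤ x) :
    (1 - η) * Real.exp (-(lam * x)) ≤ φc x := by
  have hK0 : (0:ℝ) < K := by linarith
  have hθ0 : (0:ℝ) ≤ θ := by linarith
  have hxK0 : (0:ℝ) < xK := by linarith
  have hKxK : K * Real.exp (-(ε₀ * xK)) = 1 := by
    rw [hxKdef, show ε₀ * (Real.log K / ε₀) = Real.log K by field_simp,
      Real.exp_neg, Real.exp_log hK0]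
    field_simp
  -- the subsolution and its derivatives
  set eL : ℝ → ℝ := fun y => Real.exp (-(lam * y)) with heLdef
  set eG : ℝ → ℝ := fun y => Real.exp (-(gam * y)) with heGdef
  have heLpos : ∀ y, (0:ℝ) < eL y := fun y => Real.exp_pos _
  have heGpos : ∀ y, (0:ℝ) < eG y := fun y => Real.exp_pos _
  set ψ : ℝ → ℝ := fun y => θ * (eL y - K * eG y) with hψdef
  set ψ1 : ℝ → ℝ := fun y => θ * (-(lam * eL y) + K * (gam * eG y)) with hψ1def
  set ψ2 : ℝ → ℝ := fun y => θ * (lam ^ 2 * eL y - K * (gam ^ 2 * eG y)) with hψ2def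
  have heLd : ∀ y, HasDerivAt eL (-(lam * eL y)) y := by
    intro y
    have h1 : HasDerivAt (fun z : ℝ => -(lam * z)) (-(lam * 1)) y :=
      ((hasDerivAt_id y).const_mul lam).neg
    have h2 := h1.exp
    simp only [mul_one] at h2
    convert h2 using 1
    simp only [heLdef]; ring
  have heGd : ∀ y, HasDerivAt eG (-(gam * eG y)) y := by
    intro y
    have h1 : HasDerivAt (fun z : ℝ => -(gam * z)) (-(gam * 1)) y :=
      ((hasDerivAt_id y).const_mul gam).neg
    have h2 := h1.exp
    simp only [mul_one] at h2
    convert h2 using 1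
    simp only [heGdef]; ring
  have hψd1 : ∀ y, HasDerivAt ψ (ψ1 y) y := by
    intro y
    have h := ((heLd y).sub ((heGd y).const_mul K)).const_mul θ
    exact h.congr_deriv (by simp only [hψ1def]; ring)
  have hψd2 : ∀ y, HasDerivAt ψ1 (ψ2 y) y := by
    intro y
    have h := ((((heLd y).const_mul lam).neg).add
      (((heGd y).const_mul gam).const_mul K)).const_mul θ
    exact h.congr_deriv (by simp only [hψ2def]; ring)
  -- right anchor
  have hev : ∀ᶠ y in atTop, θ ≤ φc y * Real.exp (lam * y) :=
    hφlim.eventually (eventually_ge_nhds hθ1)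
  obtain ⟨R₀, hR₀⟩ := eventually_atTop.1 hev
  set R := max (max x xK) R₀ with hRdef
  have hxR : x ≤ R := le_trans (le_max_left _ _) (le_max_left _ _)
  have hxKR : xK ≤ R := le_trans (le_max_right _ _) (le_max_left _ _)
  have hR₀R : R₀ ≤ R := le_max_right _ _
  -- helper facts
  have hεsplit : ∀ y : ℝ, eG y = eL y * Real.exp (-(ε₀ * y)) := by
    intro y
    simp only [heGdef, heLdef]
    rw [← Real.exp_add]
    congr 1
    rw [hgamdef]; ring
  have hKey : ∀ y, xK ≤ y → K * Real.exp (-(ε₀ * y)) ≤ 1 := by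
    intro y hy
    have h1 : Real.exp (-(ε₀ * y)) ≤ Real.exp (-(ε₀ * xK)) :=
      Real.exp_le_exp.2 (by linarith only [mul_nonneg hε₀0.le (sub_nonneg.2 hy)])
    have h2 := mul_le_mul_of_nonneg_left h1 hK0.le
    linarith only [h2, hKxK]
  have hψub : ∀ y, ψ y ≤ θ * eL y := by
    intro y
    have h2 : 0 ≤ K * eG y := mul_nonneg hK0.le (heGpos y).le
    simp only [hψdef]
    linarith only [mul_nonneg hθ0 h2]
  have hψ0 : ∀ y, xK ≤ y → 0 ≤ ψ y := by
    intro y hy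
    have h1 := hKey y hy
    have h2 : K * eG y ≤ eL y := by
      rw [hεsplit y]
      have h3 : 0 ≤ (1 - K * Real.exp (-(ε₀ * y))) * eL y :=
        mul_nonneg (by linarith only [h1]) (heLpos y).le
      linarith only [h3]
    simp only [hψdef]
    linarith only [mul_nonneg hθ0 (by linarith only [h2] : 0 ≤ eL y - K * eG y)]
  have heL1 : ∀ y, 0 < y → eL y ≤ 1 := by
    intro y hy
    simp only [heLdef]
    rw [← Real.exp_zero]
    exact Real.exp_le_exp.2 (by linarith only [mul_pos hlam0 hy])
  -- subsolution inequality
  have hsub : ∀ y ∈ Icc xK R, 0 ≤ ψ2 y + c * ψ1 y + fm (ψ y) := by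
    intro y hy
    have hy0 : (0:ℝ) < y := lt_of_lt_of_le hxK0 hy.1
    have hψy0 : 0 ≤ ψ y := hψ0 y hy.1
    have hψyle : ψ y ≤ θ * eL y := hψub y
    have hψy1 : ψ y ≤ 1 := by
      have h5 := mul_le_mul_of_nonneg_left (heL1 y hy0) hθ0
      linarith only [hψyle, h5, hθ1]
    have hfmlb := hCfm (ψ y) ⟨hψy0, hψy1⟩
    have hkey : ψ2 y + c * ψ1 y + μm * ψ y = θ * (K * (-(gam ^ 2 - c * gam + μm)) * eG y) := by
      simp only [hψ2def, hψ1def, hψdef]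
      linear_combination (θ * eL y) * hlamODE
    have hψsq : ψ y ^ 2 ≤ eG y := by
      have h1 : ψ y ≤ eL y := by
        have h5 : 0 ≤ (1 - θ) * eL y := mul_nonneg (by linarith only [hθ1]) (heLpos y).le
        linarith only [hψyle, h5]
      have h2 : ψ y ^ 2 ≤ eL y ^ 2 := pow_le_pow_left₀ hψy0 h1 2
      have h3 : eL y ^ 2 = Real.exp (-(lam * y) + -(lam * y)) := by
        simp only [heLdef]
        rw [Real.exp_add]
        ring
      have h4 : Real.exp (-(lam * y) + -(lam * y)) ≤ eG y := by
        simp only [heGdef]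
        refine Real.exp_le_exp.2 ?_
        have h6 : 0 ≤ (2 * lam - gam) * y :=
          mul_nonneg (by linarith only [hgam2]) hy0.le
        linarith only [h6]
      linarith
    have t1 : 0 ≤ (-(gam ^ 2 - c * gam + μm) - q₀) * (θ * (K * eG y)) :=
      mul_nonneg (by linarith) (by positivity)
    have t2 : C * ψ y ^ 2 ≤ C * eG y := mul_le_mul_of_nonneg_left hψsq hC0.le
    have t3 : 0 ≤ (θ * K * q₀ - C) * eG y := by
      apply mul_nonneg _ (heGpos y).le
      have h7 : 0 ≤ (θ - 1 / 2) * (K * q₀) :=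
        mul_nonneg (by linarith only [hθhalf]) (by linarith only [hKC, hC0])
      linarith only [h7, hKC, hC0]
    linarith only [hkey, hfmlb, t1, t2, t3]
  -- smallness
  have hψδ : ∀ y ∈ Icc xK R, ψ y ≤ δ₀ := by
    intro y hy
    have hy1 : x₁ ≤ y := le_trans hxKx₁ hy.1
    have h1 : eL y ≤ Real.exp (-(lam * x₁)) := by
      simp only [heLdef]
      exact Real.exp_le_exp.2
        (by linarith only [mul_nonneg hlam0.le (sub_nonneg.2 hy1)])
    have h2 := hψub y
    have h3 : 0 ≤ (1 - θ) * eL y := mul_nonneg (by linarith only [hθ1]) (heLpos y).le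
    linarith only [h1, h2, h3, hδsmall]
  -- anchors
  have hleft : ψ xK ≤ φc xK := by
    have hψxK : ψ xK = 0 := by
      simp only [hψdef]
      rw [hεsplit xK]
      linear_combination (-(θ * eL xK)) * hKxK
    rw [hψxK]
    exact (hφ01 xK).1.le
  have hright : ψ R ≤ φc R := by
    have h1 := hR₀ R hR₀R
    have hEE : Real.exp (lam * R) * eL R = 1 := by
      simp only [heLdef]
      rw [← Real.exp_add, show lam * R + -(lam * R) = 0 by ring, Real.exp_zero]
    have h2 := hψub R
    have hm := mul_le_mul_of_nonneg_right h1 (heLpos R).le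
    have hEE2 : φc R * (Real.exp (lam * R) * eL R) = φc R := by rw [hEE, mul_one]
    linarith only [h2, hm, hEE2]
  -- comparison
  have hcomp := comparison_half fm φc ψ ψ1 ψ2 c lam' μm ρ δ₀ xK R hρ0 hδ₀1
    hφode hφ01 hψd1 hψd2 hsub hψδ hfm_cont hfm_diff hfm_deriv hlamA hleft hright
  have hψx := hcomp x ⟨le_trans (le_max_left _ _) hx, hxR⟩
  -- final numeric estimate
  have hse : K * Real.exp (-(ε₀ * x)) ≤ η' / 2 := by
    have hxA : Real.log (2 * K / η') / ε₀ ≤ x := le_trans (le_max_right _ _) hx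
    rw [div_le_iff₀ hε₀0] at hxA
    have h3 : Real.exp (-(ε₀ * x)) ≤ Real.exp (-Real.log (2 * K / η')) :=
      Real.exp_le_exp.2 (by linarith only [hxA])
    have h4 : Real.exp (-Real.log (2 * K / η')) = η' / (2 * K) := by
      rw [Real.exp_neg, Real.exp_log (by positivity), inv_div]
    rw [h4] at h3
    calc K * Real.exp (-(ε₀ * x)) ≤ K * (η' / (2 * K)) :=
          mul_le_mul_of_nonneg_left h3 hK0.le
      _ = η' / 2 := by field_simp
  have hZ : 0 ≤ K * Real.exp (-(ε₀ * x)) := by positivity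
  have hcoef2 : 1 - η ≤ θ * (1 - K * Real.exp (-(ε₀ * x))) := by
    rw [hθdef]
    linarith only [hse, hZ, hη'η, mul_nonneg hη'0.le hZ]
  have hstep : (1 - η) * eL x ≤ (θ * (1 - K * Real.exp (-(ε₀ * x)))) * eL x :=
    mul_le_mul_of_nonneg_right hcoef2 (heLpos x).le
  have hrw : ψ x = (θ * (1 - K * Real.exp (-(ε₀ * x)))) * eL x := by
    simp only [hψdef]
    rw [hεsplit x]
    ring
  rw [hrw] at hψx
  exact le_trans hstep hψx

set_option maxHeartbeats 1000000 in
/-- claim (2.16): uniform exponential asymptotics, with respect to the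
speed `c ∈ [a,b]`, of the supercritical traveling-front profiles `φ_c` at `+∞`. -/
theorem stmt18 (fm : ℝ → ℝ) (μm : ℝ)
    (hfmC2 : ContDiffOn ℝ 2 fm (Icc (0:ℝ) 1))
    (hfm0 : fm 0 = 0) (hfm1 : fm 1 = 0)
    (hfmpos : ∀ v ∈ Ioo (0:ℝ) 1, 0 < fm v)
    (hμm : HasDerivWithinAt fm μm (Ici (0:ℝ)) 0) (hμmpos : 0 < μm)
    (a b : ℝ) (hab : a ≤ b) (ha : 2 * Real.sqrt μm < a)
    (φ : ℝ → ℝ → ℝ)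
    (hφ : ∀ c ∈ Icc a b,
      (∀ x : ℝ, φ c x ∈ Ioo (0:ℝ) 1) ∧
      (∀ x : ℝ, DifferentiableAt ℝ (φ c) x ∧ DifferentiableAt ℝ (deriv (φ c)) x ∧
        deriv (deriv (φ c)) x + c * deriv (φ c) x + fm (φ c x) = 0) ∧
      Tendsto (φ c) atBot (nhds 1) ∧ Tendsto (φ c) atTop (nhds 0) ∧
      Tendsto (fun x => φ c x * Real.exp ((c - Real.sqrt (c ^ 2 - 4 * μm)) / 2 * x))
        atTop (nhds 1)) :
    ∀ η > (0:ℝ), ∃ A : ℝ, ∀ c ∈ Icc a b, ∀ x ≥ A,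
      (1 - η) * Real.exp (-((c - Real.sqrt (c ^ 2 - 4 * μm)) / 2 * x)) ≤ φ c x := by
  have hsqnn : (0:ℝ) ≤ Real.sqrt μm := Real.sqrt_nonneg _
  have ha0 : 0 < a := lt_of_le_of_lt (by linarith) ha
  have hsq2 : Real.sqrt μm ^ 2 = μm := Real.sq_sqrt hμmpos.le
  have haa : 4 * μm < a ^ 2 := by
    have h := mul_self_lt_mul_self (by positivity : (0:ℝ) ≤ 2 * Real.sqrt μm) ha
    linarith only [h, hsq2]
  have hb0 : 0 < b := lt_of_lt_of_le ha0 hab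
  have hbb : 4 * μm < b ^ 2 := by
    have h := mul_self_lt_mul_self (by positivity : (0:ℝ) ≤ 2 * Real.sqrt μm)
      (lt_of_lt_of_le ha hab)
    linarith only [h, hsq2]
  set Da := Real.sqrt (a ^ 2 - 4 * μm) with hDadef
  have hDa0 : 0 < Da := Real.sqrt_pos.2 (by linarith)
  have hDa2 : Da ^ 2 = a ^ 2 - 4 * μm := Real.sq_sqrt (by linarith)
  set Db := Real.sqrt (b ^ 2 - 4 * μm) with hDbdef
  have hDb2 : Db ^ 2 = b ^ 2 - 4 * μm := Real.sq_sqrt (by linarith)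
  have hDb0 : 0 ≤ Db := Real.sqrt_nonneg _
  have hDbb : Db < b := by
    have h : Db < Real.sqrt (b ^ 2) := Real.sqrt_lt_sqrt (by linarith) (by linarith)
    rwa [Real.sqrt_sq hb0.le] at h
  set lamb := (b - Db) / 2 with hlambdef
  have hlamb0 : 0 < lamb := by rw [hlambdef]; linarith
  obtain ⟨C, hC0, hCfm⟩ := fm_lower fm μm hfmC2 hfm0 hμm
  set ρ := Da ^ 2 / 4 with hρdef
  have hρ0 : 0 < ρ := by positivity
  -- δ₀ via continuity of the derivative at 0
  have hU : UniqueDiffOn ℝ (Icc (0:ℝ) 1) := uniqueDiffOn_Icc one_pos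
  have h0mem : (0:ℝ) ∈ Icc (0:ℝ) 1 := left_mem_Icc.2 zero_le_one
  have hg1 : ContDiffOn ℝ 1 (derivWithin fm (Icc (0:ℝ) 1)) (Icc (0:ℝ) 1) :=
    hfmC2.derivWithin hU (by norm_num)
  have hg0 : derivWithin fm (Icc (0:ℝ) 1) 0 = μm :=
    (hμm.mono Icc_subset_Ici_self).derivWithin (hU 0 h0mem)
  have hcw : ContinuousWithinAt (derivWithin fm (Icc (0:ℝ) 1)) (Icc (0:ℝ) 1) 0 :=
    hg1.continuousOn 0 h0mem
  have hev0 : ∀ᶠ y in nhds (derivWithin fm (Icc (0:ℝ) 1) 0), y < μm + ρ / 2 := by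
    rw [hg0]
    exact Iio_mem_nhds (by linarith)
  have hpre : ∀ᶠ s in nhdsWithin (0:ℝ) (Icc (0:ℝ) 1),
      derivWithin fm (Icc (0:ℝ) 1) s < μm + ρ / 2 := hcw.eventually hev0
  rw [eventually_nhdsWithin_iff, Metric.eventually_nhds_iff] at hpre
  obtain ⟨ε, hε, hεsub⟩ := hpre
  set δ₀ := min (ε / 2) (1 / 2) with hδ₀def
  have hδ₀0 : 0 < δ₀ := lt_min (by linarith) (by norm_num)
  have hδ₀h : δ₀ ≤ 1 / 2 := min_le_right _ _
  have hδ₀1 : δ₀ < 1 := by linarith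
  have hfm_deriv : ∀ s ∈ Ioo (0:ℝ) δ₀, deriv fm s ≤ μm + ρ / 2 := by
    intro s hs
    have hs1 : s < 1 := by
      have := hs.2; have := min_le_right (ε/2) (1/2:ℝ); linarith
    have hdist : dist s (0:ℝ) < ε := by
      rw [Real.dist_eq, sub_zero, abs_of_pos hs.1]
      have := hs.2; have := min_le_left (ε/2) (1/2:ℝ); linarith
    have hmem := hεsub hdist ⟨hs.1.le, hs1.le⟩
    rw [← derivWithin_of_mem_nhds (Icc_mem_nhds hs.1 hs1)]
    linarith
  have hfm_diff : ∀ s ∈ Ioo (0:ℝ) 1, DifferentiableAt ℝ fm s := fun s hs =>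
    ((hfmC2.differentiableOn (by norm_num)) s ⟨hs.1.le, hs.2.le⟩).differentiableAt
      (Icc_mem_nhds hs.1 hs.2)
  -- uniform constants
  set ε₀ := min lamb (Da / 2) with hε₀def
  have hε₀0 : 0 < ε₀ := lt_min hlamb0 (by linarith)
  have hε₀Da : ε₀ ≤ Da / 2 := min_le_right _ _
  have hε₀lamb : ε₀ ≤ lamb := min_le_left _ _
  set q₀ := ε₀ * Da / 2 with hq₀def
  have hq₀0 : 0 < q₀ := by rw [hq₀def]; positivity
  set x₁ := max 1 (Real.log (1 / δ₀) / lamb) with hx₁def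
  have hx₁1 : (1:ℝ) ≤ x₁ := le_max_left _ _
  have hexpδ : Real.exp (-(lamb * x₁)) ≤ δ₀ := by
    have h1 : Real.log (1 / δ₀) / lamb ≤ x₁ := le_max_right _ _
    rw [div_le_iff₀ hlamb0] at h1
    rw [Real.log_div one_ne_zero (ne_of_gt hδ₀0), Real.log_one] at h1
    calc Real.exp (-(lamb * x₁)) ≤ Real.exp (Real.log δ₀) :=
          Real.exp_le_exp.2 (by linarith only [h1])
      _ = δ₀ := Real.exp_log hδ₀0
  set K := max (2 * C / q₀) (Real.exp (ε₀ * x₁)) with hKdef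
  have hK1 : (1:ℝ) ≤ K := le_trans (Real.one_le_exp (by positivity)) (le_max_right _ _)
  have hK0 : (0:ℝ) < K := by linarith
  have hKC : 2 * C ≤ K * q₀ := by
    have h := le_max_left (2 * C / q₀) (Real.exp (ε₀ * x₁))
    rw [div_le_iff₀ hq₀0] at h; linarith
  set xK := Real.log K / ε₀ with hxKdef
  have hxKx₁ : x₁ ≤ xK := by
    have h1 : Real.exp (ε₀ * x₁) ≤ K := le_max_right _ _
    have h2 : ε₀ * x₁ ≤ Real.log K := (Real.le_log_iff_exp_le hK0).2 h1
    rw [hxKdef, le_div_iff₀ hε₀0]; linarith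
  -- the claim
  intro η hη
  set η' := min η (1 / 2) with hη'def
  have hη'0 : 0 < η' := lt_min hη (by norm_num)
  have hη'h : η' ≤ 1 / 2 := min_le_right _ _
  have hη'η : η' ≤ η := min_le_left _ _
  set θ := 1 - η' / 2 with hθdef
  have hθhalf : 1 / 2 ≤ θ := by rw [hθdef]; linarith
  have hθ1 : θ < 1 := by rw [hθdef]; linarith
  refine ⟨max xK (Real.log (2 * K / η') / ε₀), ?_⟩
  intro c hc x hx
  obtain ⟨hac, hcb⟩ := hc
  have hc0 : 0 < c := lt_of_lt_of_le ha0 hac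
  have hcc : 4 * μm < c ^ 2 := by
    have h := mul_self_lt_mul_self (by positivity : (0:ℝ) ≤ 2 * Real.sqrt μm)
      (lt_of_lt_of_le ha hac)
    linarith only [h, hsq2]
  set Dc := Real.sqrt (c ^ 2 - 4 * μm) with hDcdef
  have hDc2 : Dc ^ 2 = c ^ 2 - 4 * μm := Real.sq_sqrt (by linarith)
  have hDc0 : 0 < Dc := Real.sqrt_pos.2 (by linarith)
  have hDcDa : Da ≤ Dc := Real.sqrt_le_sqrt
    (by linarith only [mul_self_le_mul_self ha0.le hac])
  have hDcc : Dc < c := by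
    have h : Dc < Real.sqrt (c ^ 2) := Real.sqrt_lt_sqrt (by linarith) (by linarith)
    rwa [Real.sqrt_sq hc0.le] at h
  have hDcDb : Dc ≤ Db := Real.sqrt_le_sqrt
    (by linarith only [mul_self_le_mul_self hc0.le hcb])
  set lam := (c - Dc) / 2 with hlamdef
  have hlam0 : 0 < lam := by rw [hlamdef]; linarith
  have hlamblam : lamb ≤ lam := by
    rw [hlambdef, hlamdef]
    exact lamb_mono μm b c Db Dc hμmpos hcb hc0 hDb2 hDc2 hDb0 hDc0.le hDbb hDcc
  set gam := lam + ε₀ with hgamdef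
  set lam' := lam + Da / 2 with hlam'def
  have hlamODE : lam ^ 2 - c * lam + μm = 0 := by
    rw [hlamdef]
    linear_combination hDc2 / 4
  have hgam2 : gam ≤ 2 * lam := by
    rw [hgamdef]
    linarith [hε₀lamb, hlamblam]
  have hgamq : q₀ ≤ -(gam ^ 2 - c * gam + μm) := by
    have hid : -(gam ^ 2 - c * gam + μm) = ε₀ * (Dc - ε₀) := by
      rw [hgamdef, hlamdef]
      linear_combination (-(1/4 : ℝ)) * hDc2
    rw [hid, hq₀def]
    have h8 : (0:ℝ) ≤ Dc - ε₀ - Da / 2 := by linarith only [hDcDa, hε₀Da]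
    linarith only [mul_nonneg hε₀0.le h8]
  have hlamA : μm + ρ ≤ c * lam' - lam' ^ 2 := by
    rw [hlam'def, hlamdef, hρdef]
    have h9 : (0:ℝ) ≤ Da / 2 * (Dc - Da) :=
      mul_nonneg (by linarith only [hDa0]) (by linarith only [hDcDa])
    linarith only [hDc2, h9]
  have hδsmall : Real.exp (-(lam * x₁)) ≤ δ₀ := by
    refine le_trans (Real.exp_le_exp.2 ?_) hexpδ
    have h10 : 0 ≤ (lam - lamb) * x₁ :=
      mul_nonneg (by linarith only [hlamblam]) (by linarith only [hx₁1])
    linarith only [h10]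
  obtain ⟨hφ01, hφode, _, _, hφlim⟩ := hφ c ⟨hac, hcb⟩
  exact per_c fm μm C ρ δ₀ ε₀ q₀ x₁ K xK θ η η' lam gam lam' c x (φ c)
    hC0 hCfm hρ0 hδ₀1 hfmC2.continuousOn hfm_diff hfm_deriv hε₀0 hq₀0 hlam0
    hlamODE hgamdef hgam2 hgamq hlamA hx₁1 hδsmall hK1 hKC hxKdef hxKx₁
    hη'0 hη'η hθdef hθhalf hθ1 hφ01 hφode hφlim hx
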